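/- arXiv:1112.3066 — 2 statements merged into one kernel-verified Lean document; each statement's English description precedes it below -/
import Mathlib

section
/- In a canonical weighted coloured-edge graph G, for every path p from a vertex u to a vertex v there exists a path q from u to v such that ω_c(q) ≤ ω_c(p) for every colour c, no two consecutive edges of q have the same colour, and q has at most as many edges as p. In particular, every minimal path weight from u to v is realized by a path with no two consecutive edges of the same colour. -/
open Classical

/-- A weighted coloured-edge graph: a directed multigraph with vertex set `V`,
edge type `E` (each edge `e` has an initial vertex `src e` and a terminal vertex
`dst e`, and self-loops are excluded), a strictly positive real weight on each edge,
and a surjective colour function onto the colour set `M`. -/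
structure WCEGraph (V : Type) (M : Type) where
  E : Type
  src : E → V
  dst : E → V
  wt : E → ℝ
  col : E → M
  wt_pos : ∀ e, 0 < wt e
  no_loop : ∀ e, src e ≠ dst e
  col_surj : Function.Surjective col

namespace WCEGraph

variable {V M : Type} (G : WCEGraph V M)

/-- `p` is a path from `u` to `v`: a nonempty finite sequence of edges, each edge's
terminal vertex being the next edge's initial vertex, starting at `u` and ending at `v`. -/
def IsPath (u v : V) (p : List G.E) : Prop :=
  p ≠ [] ∧ (∀ e ∈ p.head?, G.src e = u) ∧ (∀ e ∈ p.getLast?, G.dst e = v) ∧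
    p.Chain' (fun a b => G.dst a = G.src b)

/-- The weight `ω_c(p)` of the path `p` in colour `c`: the sum of the weights of
those edges of `p` having colour `c`. -/
noncomputable def colWeight (c : M) (p : List G.E) : ℝ :=
  (p.map (fun e => if G.col e = c then G.wt e else 0)).sum

/-- The preorder on paths: `p ≤ q` iff the weight of `p` in each colour is at most
that of `q`. -/
def pathLE (p q : List G.E) : Prop :=
  ∀ c : M, G.colWeight c p ≤ G.colWeight c q

/-- `p` is a minimal path from `u` to `v`: every path `q` from `u` to `v` with
`q ≤ p` has the same weight as `p` in every colour. -/
def IsMinimal (u v : V) (p : List G.E) : Prop :=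
  G.IsPath u v p ∧
    ∀ q, G.IsPath u v q → G.pathLE q p → ∀ c : M, G.colWeight c q = G.colWeight c p

end WCEGraph

namespace WCEGraph

/-- A weighted coloured-edge graph is canonical if it is complete in each colour
(for all distinct vertices `x ≠ y` and every colour `c` there is exactly one edge from
`x` to `y` of colour `c`) and satisfies the triangle inequality in each colour
(for all distinct vertices `x, y, z` and colour `c`, the colour-`c` edges `e : x → y`,
`f : y → z`, `g : x → z` satisfy `ω(g) ≤ ω(e) + ω(f)`). -/
def Canonical {V M : Type} (G : WCEGraph V M) : Prop :=
  (∀ x y : V, x ≠ y → ∀ c : M,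
      ∃! e : G.E, G.src e = x ∧ G.dst e = y ∧ G.col e = c) ∧
  (∀ e f g : G.E,
      G.src e ≠ G.dst e → G.src f ≠ G.dst f → G.src e ≠ G.dst f →
      G.dst e = G.src f → G.src g = G.src e → G.dst g = G.dst f →
      G.col e = G.col f → G.col e = G.col g →
      G.wt g ≤ G.wt e + G.wt f)

end WCEGraph

section Aux

lemma not_chain'_split {α : Type*} {R : α → α → Prop} :
    ∀ {p : List α}, ¬ p.Chain' R → ∃ l a b t, p = l ++ a :: b :: t ∧ ¬ R a b
  | [], h => absurd List.isChain_nil h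
  | [x], h => absurd (List.isChain_singleton x) h
  | x :: y :: t, h => by
    by_cases hxy : R x y
    · have ht : ¬ (y :: t).Chain' R := fun hc => h (List.isChain_cons_cons.2 ⟨hxy, hc⟩)
      obtain ⟨l, a, b, t', heq, hab⟩ := not_chain'_split ht
      exact ⟨x :: l, a, b, t', by rw [List.cons_append, ← heq], hab⟩
    · exact ⟨[], x, y, t, rfl, hxy⟩

namespace WCEGraph

variable {V M : Type} (G : WCEGraph V M)

lemma colWeight_append (c : M) (l t : List G.E) :
    G.colWeight c (l ++ t) = G.colWeight c l + G.colWeight c t := by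
  simp [colWeight]

lemma colWeight_cons (c : M) (e : G.E) (t : List G.E) :
    G.colWeight c (e :: t) = (if G.col e = c then G.wt e else 0) + G.colWeight c t := by
  simp [colWeight]

lemma colWeight_nonneg (c : M) (p : List G.E) : 0 ≤ G.colWeight c p := by
  apply List.sum_nonneg
  intro x hx
  obtain ⟨e, _, rfl⟩ := List.mem_map.1 hx
  split
  · exact (G.wt_pos e).le
  · exact le_refl 0

lemma reduce (hG : G.Canonical) {u v : V} (huv : u ≠ v) {p : List G.E}
    (hp : G.IsPath u v p) (hbad : ¬ p.Chain' (fun a b => G.col a ≠ G.col b)) :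
    ∃ p', G.IsPath u v p' ∧ (∀ c, G.colWeight c p' ≤ G.colWeight c p) ∧
      p'.length < p.length := by
  obtain ⟨l, e, f, t, rfl, hef⟩ := not_chain'_split hbad
  push_neg at hef
  obtain ⟨hne, hhead, hlast, hchain⟩ := hp
  rw [List.Chain', List.isChain_append] at hchain
  obtain ⟨hcl, hc2, hlink⟩ := hchain
  have hlink' : ∀ x ∈ l.getLast?, G.dst x = G.src e := fun x hx =>
    hlink x hx e rfl
  rw [List.isChain_cons_cons] at hc2
  obtain ⟨hdsef, hc3⟩ := hc2
  rw [List.isChain_cons] at hc3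
  obtain ⟨hft, hct⟩ := hc3
  -- facts about head and last of p
  have hheadl : ∀ x ∈ l.head?, G.src x = u := by
    intro x hx
    apply hhead
    rw [List.head?_append_of_ne_nil l (by rintro rfl; simp at hx)]
    exact hx
  have hheade : l = [] → G.src e = u := by
    rintro rfl
    exact hhead e rfl
  have hlastt : ∀ x ∈ t.getLast?, G.dst x = v := by
    intro x hx
    apply hlast
    rw [List.getLast?_append_cons, List.getLast?_cons_cons,
      show f :: t = [f] ++ t from rfl,
      List.getLast?_append_of_ne_nil [f] (by rintro rfl; simp at hx)]
    exact hx
  have hlastf : t = [] → G.dst f = v := by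
    rintro rfl
    apply hlast
    rw [List.getLast?_append_cons]
    rfl
  by_cases hsd : G.src e = G.dst f
  · -- splice out e and f entirely
    refine ⟨l ++ t, ⟨?_, ?_, ?_, ?_⟩, ?_, ?_⟩
    · rintro h
      rcases List.append_eq_nil_iff.1 h with ⟨rfl, rfl⟩
      exact huv ((hheade rfl).symm.trans (hsd.trans (hlastf rfl)))
    · intro x hx
      rcases l with _ | ⟨a, l'⟩
      · simp only [List.nil_append] at hx
        exact ((hft x hx).symm.trans hsd.symm).trans (hheade rfl)
      · rw [List.head?_append_of_ne_nil _ (by simp)] at hx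
        exact hheadl x hx
    · intro x hx
      rcases t with _ | ⟨b, t'⟩
      · rw [List.append_nil] at hx
        exact (hlink' x hx).trans (hsd.trans (hlastf rfl))
      · rw [List.getLast?_append_of_ne_nil _ (by simp)] at hx
        exact hlastt x hx
    · rw [List.Chain', List.isChain_append]
      exact ⟨hcl, hct, fun x hx y hy => (hlink' x hx).trans (hsd.trans (hft y hy))⟩
    · intro c
      rw [colWeight_append, colWeight_append, colWeight_cons, colWeight_cons]
      have h1 : (0:ℝ) ≤ if G.col e = c then G.wt e else 0 := by
        split <;> simp [le_of_lt (G.wt_pos e)]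
      have h2 : (0:ℝ) ≤ if G.col f = c then G.wt f else 0 := by
        split <;> simp [le_of_lt (G.wt_pos f)]
      linarith
    · simp [Nat.lt_succ]
  · -- replace e, f by the unique edge g of the same colour
    obtain ⟨g, ⟨hgs, hgd, hgc⟩, _⟩ := hG.1 (G.src e) (G.dst f) hsd (G.col e)
    have htri : G.wt g ≤ G.wt e + G.wt f :=
      hG.2 e f g (G.no_loop e) (G.no_loop f) hsd hdsef hgs hgd hef hgc.symm
    refine ⟨l ++ g :: t, ⟨by simp, ?_, ?_, ?_⟩, ?_, ?_⟩
    · intro x hx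
      rcases l with _ | ⟨a, l'⟩
      · simp only [List.nil_append, List.head?_cons, Option.mem_some_iff] at hx
        rw [← hx] at *
        exact hgs.trans (hheade rfl)
      · rw [List.head?_append_of_ne_nil _ (by simp)] at hx
        exact hheadl x hx
    · intro x hx
      rcases t with _ | ⟨b, t'⟩
      · rw [List.getLast?_append_cons] at hx
        simp only [List.getLast?_singleton, Option.mem_some_iff] at hx
        rw [← hx]
        exact hgd.trans (hlastf rfl)
      · rw [List.getLast?_append_cons, List.getLast?_cons_cons] at hx
        exact hlastt x hx
    · rw [List.Chain', List.isChain_append, List.isChain_cons]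
      refine ⟨hcl, ⟨fun y hy => hgd.trans (hft y hy), hct⟩, fun x hx y hy => ?_⟩
      simp only [List.head?_cons, Option.mem_some_iff] at hy
      rw [← hy]
      exact (hlink' x hx).trans hgs.symm
    · intro c
      rw [colWeight_append, colWeight_append, colWeight_cons, colWeight_cons,
        colWeight_cons]
      have key : (if G.col g = c then G.wt g else 0) ≤
          (if G.col e = c then G.wt e else 0) + (if G.col f = c then G.wt f else 0) := by
        rw [hgc, hef]
        split
        · exact htri
        · norm_num
      linarith
    · simp [Nat.lt_succ]

end WCEGraph

end Aux

/-- In a canonical weighted coloured-edge graph, every path `p` from a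
vertex `u` to another vertex `v` is dominated by a path `q` from `u` to `v` whose weight
in each colour is at most that of `p`, no two consecutive edges of which have the same
colour, and which has at most as many edges as `p`. -/
theorem canonical_exists_alternating_dominating_path {V M : Type} (G : WCEGraph V M)
    (hG : G.Canonical) (u v : V) (huv : u ≠ v)
    (p : List G.E) (hp : G.IsPath u v p) :
    ∃ q : List G.E, G.IsPath u v q ∧
      (∀ c : M, G.colWeight c q ≤ G.colWeight c p) ∧
      q.Chain' (fun a b => G.col a ≠ G.col b) ∧
      q.length ≤ p.length := by
  have key : ∀ n (p : List G.E), p.length ≤ n → G.IsPath u v p →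
      ∃ q : List G.E, G.IsPath u v q ∧
        (∀ c : M, G.colWeight c q ≤ G.colWeight c p) ∧
        q.Chain' (fun a b => G.col a ≠ G.col b) ∧
        q.length ≤ p.length := by
    intro n
    induction n with
    | zero =>
      intro p hlen hp
      rw [Nat.le_zero, List.length_eq_zero_iff] at hlen
      exact absurd hlen hp.1
    | succ n ih =>
      intro p hlen hp
      by_cases hc : p.Chain' (fun a b => G.col a ≠ G.col b)
      · exact ⟨p, hp, fun c => le_refl _, hc, le_refl _⟩
      · obtain ⟨p', hp', hw', hlt'⟩ := G.reduce hG huv hp hc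
        obtain ⟨q, hq, hwq, hcq, hlq⟩ := ih p' (by omega) hp'
        exact ⟨q, hq, fun c => (hwq c).trans (hw' c), hcq, by omega⟩
  exact key p.length p (le_refl _) hp
end

section
/- Let G be a finite weighted bicoloured-edge graph with colours {red, green}, and let u, v be vertices of G such that there exists a path from u to v using only green edges and a path from u to v using only red edges; let r_tot be the least red weight of a pure red path from u to v. Suppose the weights of all red edges e are independent random variables with probability density functions bounded above by constants φ_e. Then for every r with 0 ≤ r < r_tot and every ε > 0, ℙ(Δ(r) ≤ r + ε) ≤ (Σ_{red edges e} φ_e) · ε. -/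
open Classical MeasureTheory ProbabilityTheory

/-- The combinatorial data of a weighted bicoloured-edge graph: a directed multigraph
with vertex set `V` and edge type `E` (no self-loops), each edge being either red
(`red e = true`) or green (`red e = false`).  The (strictly positive) edge weights,
which in this section may be random, are supplied separately as functions `w : E → ℝ`. -/
structure BiGraph (V : Type) where
  E : Type
  src : E → V
  dst : E → V
  red : E → Bool
  no_loop : ∀ e, src e ≠ dst e

namespace BiGraph

variable {V : Type} (G : BiGraph V)

/-- `p` is a path from `u` to `v`: a nonempty finite sequence of edges, each edge's
terminal vertex being the next edge's initial vertex, starting at `u` and ending at `v`. -/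
def IsPath (u v : V) (p : List G.E) : Prop :=
  p ≠ [] ∧ (∀ e ∈ p.head?, G.src e = u) ∧ (∀ e ∈ p.getLast?, G.dst e = v) ∧
    p.Chain' (fun a b => G.dst a = G.src b)

/-- `ω_red(p)`: the sum of the weights of the red edges of `p`, for weights `w`. -/
def redW (w : G.E → ℝ) (p : List G.E) : ℝ :=
  (p.map (fun e => if G.red e then w e else 0)).sum

/-- `ω_green(p)`: the sum of the weights of the green edges of `p`, for weights `w`. -/
def greenW (w : G.E → ℝ) (p : List G.E) : ℝ :=
  (p.map (fun e => if G.red e then 0 else w e)).sum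

/-- `p` is a minimal path from `u` to `v` (w.r.t. weights `w`): every path `q` from `u`
to `v` with `ω_red(q) ≤ ω_red(p)` and `ω_green(q) ≤ ω_green(p)` has the same red and
green weights as `p`. -/
def Minimal (w : G.E → ℝ) (u v : V) (p : List G.E) : Prop :=
  G.IsPath u v p ∧ ∀ q, G.IsPath u v q →
    G.redW w q ≤ G.redW w p → G.greenW w q ≤ G.greenW w p →
    G.redW w q = G.redW w p ∧ G.greenW w q = G.greenW w p

/-- `g_r`: the least green weight of a path from `u` to `v` that avoids the edge `e`
and has red weight at most `r`. -/
noncomputable def gVal (w : G.E → ℝ) (u v : V) (e : G.E) (r : ℝ) : ℝ :=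
  sInf (G.greenW w '' {p | G.IsPath u v p ∧ e ∉ p ∧ G.redW w p ≤ r})

/-- The set of paths from `u` to `v` through the edge `e` whose green weight is less
than `g_r`; the set over whose red weights `Δ_e(r)` is the infimum.  `Δ_e(r) = ∞`
corresponds to this set being empty. -/
def DeltaESet (w : G.E → ℝ) (u v : V) (e : G.E) (r : ℝ) : Set (List G.E) :=
  {q | G.IsPath u v q ∧ e ∈ q ∧ G.greenW w q < G.gVal w u v e r}

/-- `Δ_e(r)`: the least red weight of a path from `u` to `v` through `e` with green
weight less than `g_r`. -/
noncomputable def DeltaE (w : G.E → ℝ) (u v : V) (e : G.E) (r : ℝ) : ℝ :=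
  sInf (G.redW w '' G.DeltaESet w u v e r)

/-- `r_tot`: the least red weight of a pure red path from `u` to `v`. -/
noncomputable def rtot (w : G.E → ℝ) (u v : V) : ℝ :=
  sInf (G.redW w '' {p | G.IsPath u v p ∧ ∀ e ∈ p, G.red e = true})

/-- `Δ(r)`: the least red weight of a minimal path from `u` to `v` whose red weight
exceeds `r`. -/
noncomputable def Delta (w : G.E → ℝ) (u v : V) (r : ℝ) : ℝ :=
  sInf (G.redW w '' {q | G.Minimal w u v q ∧ r < G.redW w q})

end BiGraph
namespace BiGraph
variable {V : Type} {G : BiGraph V}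

@[simp] lemma redW_nil (w : G.E → ℝ) : G.redW w ([] : List G.E) = 0 := by simp [redW]
@[simp] lemma redW_cons (w : G.E → ℝ) (a : G.E) (p : List G.E) :
    G.redW w (a :: p) = (if G.red a then w a else 0) + G.redW w p := by simp [redW]
@[simp] lemma redW_append (w : G.E → ℝ) (p q : List G.E) :
    G.redW w (p ++ q) = G.redW w p + G.redW w q := by simp [redW]
@[simp] lemma greenW_nil (w : G.E → ℝ) : G.greenW w ([] : List G.E) = 0 := by simp [greenW]
@[simp] lemma greenW_cons (w : G.E → ℝ) (a : G.E) (p : List G.E) :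
    G.greenW w (a :: p) = (if G.red a then 0 else w a) + G.greenW w p := by simp [greenW]
@[simp] lemma greenW_append (w : G.E → ℝ) (p q : List G.E) :
    G.greenW w (p ++ q) = G.greenW w p + G.greenW w q := by simp [greenW]

lemma redW_nonneg {w : G.E → ℝ} (hw : ∀ e, 0 ≤ w e) (p : List G.E) : 0 ≤ G.redW w p := by
  induction p with
  | nil => simp
  | cons a p ih => exact add_nonneg (by by_cases h : G.red a <;> simp [h, hw a]) ih

lemma greenW_nonneg {w : G.E → ℝ} (hw : ∀ e, 0 ≤ w e) (p : List G.E) : 0 ≤ G.greenW w p := by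
  induction p with
  | nil => simp
  | cons a p ih => exact add_nonneg (by by_cases h : G.red a <;> simp [h, hw a]) ih

lemma redW_congr {w w' : G.E → ℝ} {p : List G.E} (h : ∀ e ∈ p, w e = w' e) :
    G.redW w p = G.redW w' p := by
  induction p with
  | nil => simp
  | cons a p ih =>
    simp only [redW_cons, h a (by simp), ih fun e he => h e (by simp [he])]

lemma greenW_congr_green {w w' : G.E → ℝ} (h : ∀ e, G.red e = false → w e = w' e)
    (p : List G.E) : G.greenW w p = G.greenW w' p := by
  induction p with
  | nil => simp
  | cons a p ih =>
    simp only [greenW_cons, ih]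
    congr 1
    rcases hb : G.red a with _ | _
    · simp [hb, h a hb]
    · simp [hb]

lemma redW_pure_green {w : G.E → ℝ} {p : List G.E} (h : ∀ e ∈ p, G.red e = false) :
    G.redW w p = 0 := by
  induction p with
  | nil => simp
  | cons a p ih =>
    simp [redW_cons, h a (by simp), ih fun e he => h e (by simp [he])]

lemma greenW_pure_red {w : G.E → ℝ} {p : List G.E} (h : ∀ e ∈ p, G.red e = true) :
    G.greenW w p = 0 := by
  induction p with
  | nil => simp
  | cons a p ih =>
    simp [greenW_cons, h a (by simp), ih fun e he => h e (by simp [he])]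

lemma redW_update [DecidableEq G.E] {w w' : G.E → ℝ} {e : G.E} (he : G.red e = true)
    (hagree : ∀ e', e' ≠ e → w e' = w' e') (q : List G.E) :
    G.redW w' q = G.redW w q + (q.count e : ℝ) * (w' e - w e) := by
  induction q with
  | nil => simp
  | cons a q ih =>
    simp only [redW_cons, ih, List.count_cons]
    by_cases hae : a = e
    · subst hae
      simp only [he, if_true, beq_self_eq_true]
      push_cast
      ring
    · rw [hagree a hae]
      have : (a == e) = false := beq_eq_false_iff_ne.2 hae
      simp only [this, if_false]
      push_cast
      ring

end BiGraph
section Fin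
variable {E : Type} [Fintype E] [DecidableEq E]

lemma sum_map_eq_sum_count (f : E → ℝ) (q : List E) :
    (q.map f).sum = ∑ e : E, (q.count e : ℝ) * f e := by
  induction q with
  | nil => simp
  | cons a q ih =>
    have key : ∀ e : E, (((a :: q).count e : ℝ)) * f e
        = (q.count e : ℝ) * f e + (if e = a then f e else 0) := by
      intro e
      rw [List.count_cons]
      by_cases h : e = a
      · subst h; simp; push_cast; ring
      · have : (e == a) = false := beq_eq_false_iff_ne.2 h
        have h1 : ¬a = e := fun hh => h hh.symm
        simp [this, h, h1]
    simp only [List.map_cons, List.sum_cons, ih, key, Finset.sum_add_distrib,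
      Finset.sum_ite_eq' Finset.univ a f, Finset.mem_univ, if_true]
    ring

/-- The set of values `(q.map f).sum ≤ B` over all lists `q` is finite, for `f ≥ 0`. -/
lemma finite_values (f : E → ℝ) (hf : ∀ e, 0 ≤ f e) (B : ℝ) :
    {x : ℝ | (∃ q : List E, (q.map f).sum = x) ∧ x ≤ B}.Finite := by
  classical
  set N : E → ℕ := fun e => ⌊B / f e⌋₊ with hN
  have hfin : ({n : E → ℕ | ∀ e, n e ∈ Set.Iic (N e)}).Finite := by
    have := Set.Finite.pi (fun e : E => Set.finite_Iic (N e))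
    exact this.subset (fun n hn => by simpa [Set.mem_pi, Pi.le_def] using hn)
  have himg : {x : ℝ | (∃ q : List E, (q.map f).sum = x) ∧ x ≤ B} ⊆
      (fun n : E → ℕ => ∑ e : E, (n e : ℝ) * f e) '' {n | ∀ e, n e ∈ Set.Iic (N e)} := by
    rintro x ⟨⟨q, rfl⟩, hxB⟩
    refine ⟨fun e => if f e = 0 then 0 else q.count e, fun e => ?_, ?_⟩
    · by_cases h : f e = 0
      · simp [h]
      · have hfe : 0 < f e := lt_of_le_of_ne (hf e) (Ne.symm h)
        have hsingle : (q.count e : ℝ) * f e ≤ (q.map f).sum := by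
          rw [sum_map_eq_sum_count f q]
          exact Finset.single_le_sum (f := fun e' => (q.count e' : ℝ) * f e')
            (fun e' _ => mul_nonneg (by positivity) (hf e')) (Finset.mem_univ e)
        simp only [h, if_false, Set.mem_Iic, hN]
        apply Nat.le_floor
        rw [le_div_iff₀ hfe]
        exact le_trans hsingle hxB
    · rw [sum_map_eq_sum_count]
      apply Finset.sum_congr rfl
      intro e _
      by_cases h : f e = 0 <;> simp [h]
  exact (hfin.image _).subset himg

/-- Attainment of the minimum of `(·.map f).sum` over a nonempty set of lists. -/
lemma exists_min_list (f : E → ℝ) (hf : ∀ e, 0 ≤ f e) {S : Set (List E)} (hS : S.Nonempty) :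
    ∃ q ∈ S, ∀ q' ∈ S, (q.map f).sum ≤ (q'.map f).sum := by
  obtain ⟨q1, hq1⟩ := hS
  set B := (q1.map f).sum
  set Vs := {x : ℝ | (∃ q ∈ S, (q.map f).sum = x) ∧ x ≤ B} with hVs
  have hVfin : Vs.Finite := (finite_values f hf B).subset (by
    rintro x ⟨⟨q, _, rfl⟩, hxB⟩; exact ⟨⟨q, rfl⟩, hxB⟩)
  have hVne : Vs.Nonempty := ⟨B, ⟨⟨q1, hq1, rfl⟩, le_rfl⟩⟩
  obtain ⟨m, hm, hmin⟩ := Set.exists_min_image Vs id hVfin hVne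
  obtain ⟨⟨q, hqS, hqm⟩, hmB⟩ := hm
  refine ⟨q, hqS, fun q' hq' => ?_⟩
  by_cases h : (q'.map f).sum ≤ B
  · rw [hqm]; exact hmin _ ⟨⟨q', hq', rfl⟩, h⟩
  · rw [hqm]; exact le_trans hmB (le_of_not_ge h)

lemma sInf_eq_min {S : Set ℝ} {m : ℝ} (hm : m ∈ S) (hlb : ∀ x ∈ S, m ≤ x) : sInf S = m :=
  le_antisymm (csInf_le ⟨m, hlb⟩ hm) (le_csInf ⟨m, hm⟩ hlb)

end Fin
lemma exists_dup_decomp {α : Type} {l : List α} (h : ¬l.Nodup) :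
    ∃ (x : α) (s t u : List α), l = s ++ x :: (t ++ x :: u) := by
  induction l with
  | nil => simp at h
  | cons a l ih =>
    by_cases ha : a ∈ l
    · obtain ⟨s, t, rfl⟩ := List.mem_iff_append.1 ha
      exact ⟨a, [], s, t, rfl⟩
    · have hl : ¬l.Nodup := fun hl => h (List.nodup_cons.2 ⟨ha, hl⟩)
      obtain ⟨x, s, t, u, rfl⟩ := ih hl
      exact ⟨x, a :: s, t, u, rfl⟩

namespace BiGraph
variable {V : Type} {G : BiGraph V}

lemma IsPath.excise {u v : V} {s t c : List G.E} {x : G.E}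
    (h : G.IsPath u v (s ++ x :: (t ++ x :: c))) : G.IsPath u v (s ++ x :: c) := by
  obtain ⟨hne, hh, hl, hc⟩ := h
  refine ⟨by simp, ?_, ?_, ?_⟩
  · cases s with
    | nil => simpa using hh
    | cons a s => simpa using hh
  · rw [List.getLast?_append_cons] at hl ⊢
    have heq : (x :: (t ++ x :: c)).getLast? = (x :: c).getLast? := by
      rw [show x :: (t ++ x :: c) = (x :: t) ++ x :: c by simp, List.getLast?_append_cons]
    rwa [heq] at hl
  · have hc' : List.Chain' (fun a b => G.dst a = G.src b) ((s ++ [x]) ++ (t ++ x :: c)) := by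
      simpa [List.append_assoc] using hc
    unfold List.Chain' at hc'
    rw [List.isChain_append] at hc'
    obtain ⟨h1, h2, _⟩ := hc'
    rw [List.isChain_append] at h2
    obtain ⟨_, h3, _⟩ := h2
    rw [List.isChain_cons] at h3
    have goal : List.Chain' (fun a b => G.dst a = G.src b) ((s ++ [x]) ++ c) := by
      unfold List.Chain'
      rw [List.isChain_append]
      refine ⟨h1, h3.2, ?_⟩
      intro y hy z hz
      have : y = x := by
        rw [List.getLast?_append_cons] at hy
        exact (by simpa using hy : x = y).symm
      subst this
      exact h3.1 z hz
    simpa [List.append_assoc] using goal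

lemma excise_redW (w : G.E → ℝ) (s t c : List G.E) (x : G.E) :
    G.redW w (s ++ x :: (t ++ x :: c)) = G.redW w (s ++ x :: c) + G.redW w (x :: t) := by
  simp only [redW_append, redW_cons]; ring

lemma excise_greenW (w : G.E → ℝ) (s t c : List G.E) (x : G.E) :
    G.greenW w (s ++ x :: (t ++ x :: c)) = G.greenW w (s ++ x :: c) + G.greenW w (x :: t) := by
  simp only [greenW_append, greenW_cons]; ring

lemma redW_add_greenW_pos {w : G.E → ℝ} (hw : ∀ e, 0 < w e) (x : G.E) (t : List G.E) :
    0 < G.redW w (x :: t) + G.greenW w (x :: t) := by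
  have hx : (if G.red x then w x else 0) + (if G.red x then 0 else w x) = w x := by
    by_cases h : G.red x <;> simp [h]
  have h1 : 0 ≤ G.redW w t := redW_nonneg (fun e => (hw e).le) t
  have h2 : 0 ≤ G.greenW w t := greenW_nonneg (fun e => (hw e).le) t
  have := hw x
  simp only [redW_cons, greenW_cons]
  nlinarith [hx]

lemma pure_red_of_greenW_eq_zero {w : G.E → ℝ} (hw : ∀ e, 0 < w e) {q : List G.E}
    (h : G.greenW w q = 0) : ∀ e ∈ q, G.red e = true := by
  induction q with
  | nil => simp
  | cons a q ih =>
    have h1 : 0 ≤ (if G.red a then (0:ℝ) else w a) := by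
      by_cases hb : G.red a <;> simp [hb, (hw a).le]
    have h2 : 0 ≤ G.greenW w q := greenW_nonneg (fun e => (hw e).le) q
    rw [greenW_cons] at h
    have ha : (if G.red a then (0:ℝ) else w a) = 0 := by linarith
    have hq : G.greenW w q = 0 := by linarith
    intro e he
    rcases List.mem_cons.1 he with rfl | he'
    · by_cases hb : G.red e
      · exact hb
      · simp [hb] at ha; exact absurd ha (hw e).ne'
    · exact ih hq e he'

lemma minimal_nodup {w : G.E → ℝ} (hw : ∀ e, 0 < w e) {u v : V} {p : List G.E}
    (hp : G.Minimal w u v p) : p.Nodup := by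
  by_contra hnd
  obtain ⟨x, s, t, c, rfl⟩ := exists_dup_decomp hnd
  have hq := IsPath.excise hp.1
  have hr0 : 0 ≤ G.redW w (x :: t) := redW_nonneg (fun e => (hw e).le) _
  have hg0 : 0 ≤ G.greenW w (x :: t) := greenW_nonneg (fun e => (hw e).le) _
  have hsplit_r := G.excise_redW w s t c x
  have hsplit_g := G.excise_greenW w s t c x
  obtain ⟨h1, h2⟩ := hp.2 (s ++ x :: c) hq (by linarith) (by linarith)
  have := G.redW_add_greenW_pos hw x t
  linarith

lemma exists_min_redW [Fintype G.E] {w : G.E → ℝ} (hw : ∀ e, 0 ≤ w e)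
    {S : Set (List G.E)} (hS : S.Nonempty) :
    ∃ q ∈ S, ∀ q' ∈ S, G.redW w q ≤ G.redW w q' := by
  classical
  exact exists_min_list (fun e => if G.red e then w e else 0)
    (fun e => by by_cases h : G.red e <;> simp [h, hw e]) hS

lemma exists_min_greenW [Fintype G.E] {w : G.E → ℝ} (hw : ∀ e, 0 ≤ w e)
    {S : Set (List G.E)} (hS : S.Nonempty) :
    ∃ q ∈ S, ∀ q' ∈ S, G.greenW w q ≤ G.greenW w q' := by
  classical
  exact exists_min_list (fun e => if G.red e then 0 else w e)
    (fun e => by by_cases h : G.red e <;> simp [h, hw e]) hS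

lemma redW_eq_sum_toFinset [Fintype G.E] [DecidableEq G.E] (w : G.E → ℝ) {p : List G.E}
    (h : p.Nodup) :
    G.redW w p = ∑ e ∈ p.toFinset.filter (fun e => G.red e = true), w e := by
  rw [Finset.sum_filter, List.sum_toFinset _ h]
  rfl

end BiGraph
namespace BiGraph

/-- Predicate `Q_e q w`: `q` is a path through `e` whose green weight beats every
`e`-avoiding path of red weight at most `r`. -/
def Qpred {V : Type} (G : BiGraph V) (w : G.E → ℝ) (u v : V) (e : G.E) (r : ℝ)
    (q : List G.E) : Prop :=
  G.IsPath u v q ∧ e ∈ q ∧ ∀ p', G.IsPath u v p' → e ∉ p' → G.redW w p' ≤ r →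
    G.greenW w q < G.greenW w p'

/-- The measurable surrogate of `r < Δ_e(r) ≤ r + ε`. -/
def Ppred {V : Type} (G : BiGraph V) (w : G.E → ℝ) (u v : V) (e : G.E) (r ε : ℝ) : Prop :=
  (∃ q, G.Qpred w u v e r q ∧ G.redW w q ≤ r + ε) ∧
    (∀ q, G.Qpred w u v e r q → r < G.redW w q)

variable {V : Type} {G : BiGraph V}

lemma key_combinatorial [Fintype G.E] {u v : V}
    (hgreen : ∃ p, G.IsPath u v p ∧ ∀ e ∈ p, G.red e = false)
    (hred : ∃ p, G.IsPath u v p ∧ ∀ e ∈ p, G.red e = true)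
    {w : G.E → ℝ} (hw : ∀ e, 0 < w e) {r ε : ℝ} (hr : 0 ≤ r)
    (hrtot : r < G.rtot w u v) (hDelta : G.Delta w u v r ≤ r + ε) :
    ∃ e : G.E, G.red e = true ∧ G.Ppred w u v e r ε := by
  classical
  have hw0 : ∀ e, 0 ≤ w e := fun e => (hw e).le
  obtain ⟨pg, hpg, hpgcol⟩ := hgreen
  obtain ⟨pr, hpr, hprcol⟩ := hred
  -- every pure red path has red weight > r
  have hpure : ∀ q, G.IsPath u v q → (∀ e ∈ q, G.red e = true) → r < G.redW w q := by
    intro q hq hqc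
    have hbdd : BddBelow (G.redW w '' {p | G.IsPath u v p ∧ ∀ e ∈ p, G.red e = true}) := by
      refine ⟨0, ?_⟩
      rintro x ⟨p, _, rfl⟩
      exact G.redW_nonneg hw0 p
    exact lt_of_lt_of_le hrtot (csInf_le hbdd ⟨q, ⟨hq, hqc⟩, rfl⟩)
  -- minimal pure red path q0
  obtain ⟨q0, hq0mem, hq0min⟩ := G.exists_min_redW hw0
    (S := {p | G.IsPath u v p ∧ ∀ e ∈ p, G.red e = true}) ⟨pr, hpr, hprcol⟩
  obtain ⟨hq0p, hq0c⟩ := hq0mem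
  have hq0minimal : G.Minimal w u v q0 := by
    refine ⟨hq0p, fun q' hq' hred' hgreen' => ?_⟩
    have hg0 : G.greenW w q0 = 0 := G.greenW_pure_red hq0c
    have hg'0 : G.greenW w q' = 0 :=
      le_antisymm (by rw [← hg0]; exact hgreen') (G.greenW_nonneg hw0 q')
    have hq'c : ∀ e ∈ q', G.red e = true := G.pure_red_of_greenW_eq_zero hw hg'0
    exact ⟨le_antisymm hred' (hq0min q' ⟨hq', hq'c⟩), by rw [hg0, hg'0]⟩
  set M := {q | G.Minimal w u v q ∧ r < G.redW w q} with hM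
  have hq0M : q0 ∈ M := ⟨hq0minimal, hpure q0 hq0p hq0c⟩
  -- p attains Δ(r)
  obtain ⟨p, hpM, hpmin⟩ := G.exists_min_redW hw0 (S := M) ⟨q0, hq0M⟩
  have hDp : G.Delta w u v r = G.redW w p := by
    unfold Delta
    rw [← hM]
    refine sInf_eq_min ⟨p, hpM, rfl⟩ ?_
    rintro x ⟨q, hqM, rfl⟩
    exact hpmin q hqM
  have hple : G.redW w p ≤ r + ε := by rw [← hDp]; exact hDelta
  have hpgt : r < G.redW w p := hpM.2
  have hpminimal : G.Minimal w u v p := hpM.1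
  -- the set of paths with red weight at most r, and its green-then-red minimiser
  set Sh := {q | G.IsPath u v q ∧ G.redW w q ≤ r} with hSh
  have hShne : Sh.Nonempty := ⟨pg, hpg, by rw [G.redW_pure_green hpgcol]; exact hr⟩
  obtain ⟨qa, hqaSh, hqagreen⟩ := G.exists_min_greenW hw0 hShne
  set ghat := G.greenW w qa with hghat
  obtain ⟨qh, hqhmem, hqhred⟩ := G.exists_min_redW hw0
    (S := {q ∈ Sh | G.greenW w q = ghat}) ⟨qa, hqaSh, rfl⟩
  obtain ⟨hqhSh, hqhg⟩ := hqhmem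
  -- q̂ has no repeated edges
  have hqhnodup : qh.Nodup := by
    by_contra hnd
    obtain ⟨x, s, t, c, hdecomp⟩ := exists_dup_decomp hnd
    rw [hdecomp] at hqhSh hqhg
    have hq'path := IsPath.excise hqhSh.1
    have hr0 : 0 ≤ G.redW w (x :: t) := G.redW_nonneg hw0 _
    have hg0 : 0 ≤ G.greenW w (x :: t) := G.greenW_nonneg hw0 _
    have hsplit_r := G.excise_redW w s t c x
    have hsplit_g := G.excise_greenW w s t c x
    have hq'Sh : (s ++ x :: c) ∈ Sh := ⟨hq'path, by
      have := hqhSh.2; linarith⟩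
    have hgge : ghat ≤ G.greenW w (s ++ x :: c) := hqagreen _ hq'Sh
    have hg' : G.greenW w (s ++ x :: c) = ghat := le_antisymm (by linarith) hgge
    have hredle := hqhred (s ++ x :: c) ⟨hq'Sh, hg'⟩
    have := G.redW_add_greenW_pos hw x t
    rw [hdecomp] at hredle
    linarith
  -- p has no repeated edges
  have hpnodup : p.Nodup := G.minimal_nodup hw hpminimal
  -- ω_green(p) < ĝ
  have hgp : G.greenW w p < ghat := by
    by_contra hle
    push_neg at hle
    obtain ⟨h1, _⟩ := hpminimal.2 qh hqhSh.1
      (le_trans hqhSh.2 hpgt.le) (by rw [hqhg]; exact hle)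
    have := hqhSh.2
    linarith
  -- a red edge of p avoided by q̂
  have hexe : ∃ e, G.red e = true ∧ e ∈ p ∧ e ∉ qh := by
    by_contra hno
    push_neg at hno
    have hsub : p.toFinset.filter (fun e => G.red e = true) ⊆
        qh.toFinset.filter (fun e => G.red e = true) := by
      intro e he
      simp only [Finset.mem_filter, List.mem_toFinset] at he ⊢
      exact ⟨hno e he.2 he.1, he.2⟩
    have h1 := G.redW_eq_sum_toFinset w hpnodup
    have h2 := G.redW_eq_sum_toFinset w hqhnodup
    have hsum := Finset.sum_le_sum_of_subset_of_nonneg hsub (fun e _ _ => hw0 e)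
    have := hqhSh.2
    linarith
  obtain ⟨e, hecol, hep, heqh⟩ := hexe
  refine ⟨e, hecol, ?_⟩
  show (∃ q, G.Qpred w u v e r q ∧ G.redW w q ≤ r + ε) ∧
    (∀ q, G.Qpred w u v e r q → r < G.redW w q)
  refine ⟨⟨p, ⟨hpminimal.1, hep, ?_⟩, hple⟩, ?_⟩
  · intro p' hp'path _ hp'red
    exact lt_of_lt_of_le hgp (hqagreen p' ⟨hp'path, hp'red⟩)
  · rintro q ⟨hqpath, _, hQ⟩
    by_contra hqr
    push_neg at hqr
    have hqSh : q ∈ Sh := ⟨hqpath, hqr⟩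
    have h1 : ghat ≤ G.greenW w q := hqagreen q hqSh
    have h2 : G.greenW w q < G.greenW w qh := hQ qh hqhSh.1 heqh hqhSh.2
    rw [hqhg] at h2
    linarith

end BiGraph
namespace BiGraph
variable {V : Type} {G : BiGraph V}

lemma Qpred_congr {u v : V} {e : G.E} (hecol : G.red e = true) {w1 w2 : G.E → ℝ}
    (hagree : ∀ e', e' ≠ e → w1 e' = w2 e') {r : ℝ} {q : List G.E}
    (h : G.Qpred w1 u v e r q) : G.Qpred w2 u v e r q := by
  have hgreen : ∀ l : List G.E, G.greenW w1 l = G.greenW w2 l := fun l =>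
    G.greenW_congr_green (fun e' he' => hagree e' (fun hc => by rw [hc, hecol] at he'; simp at he')) l
  obtain ⟨hpath, hmem, hall⟩ := h
  refine ⟨hpath, hmem, fun p' hp' hep' hrp' => ?_⟩
  have hred' : G.redW w1 p' = G.redW w2 p' :=
    G.redW_congr (fun e'' he'' => hagree e'' (fun hc => hep' (hc ▸ he'')))
  rw [← hgreen, ← hgreen]
  exact hall p' hp' hep' (by rw [hred']; exact hrp')

lemma Ppred_diameter {u v : V} {e : G.E} (hecol : G.red e = true) {w1 w2 : G.E → ℝ}
    (hagree : ∀ e', e' ≠ e → w1 e' = w2 e') (hle : w1 e ≤ w2 e) {r ε : ℝ}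
    (h1 : G.Ppred w1 u v e r ε) (h2 : G.Ppred w2 u v e r ε) : w2 e - w1 e ≤ ε := by
  classical
  obtain ⟨⟨q2, hQ2, hred2⟩, _⟩ := h2
  have hQ1 : G.Qpred w1 u v e r q2 :=
    G.Qpred_congr hecol (fun e' he' => (hagree e' he').symm) hQ2
  have hgt : r < G.redW w1 q2 := h1.2 q2 hQ1
  have hupd : G.redW w2 q2 = G.redW w1 q2 + (q2.count e : ℝ) * (w2 e - w1 e) :=
    G.redW_update hecol hagree q2
  have hcount : 1 ≤ (q2.count e : ℝ) := by
    have : 0 < q2.count e := List.count_pos_iff.2 hQ2.2.1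
    exact_mod_cast this
  nlinarith [hred2, hgt, hupd, hcount, sub_nonneg.2 hle]

end BiGraph
namespace BiGraph
open MeasureTheory ProbabilityTheory

variable {V : Type}

lemma per_edge_bound (G : BiGraph V) [Fintype G.E] (u v : V)
    {Ω : Type} [MeasurableSpace Ω] (μ : Measure Ω) [IsProbabilityMeasure μ]
    (X : G.E → Ω → ℝ) (hX : ∀ e, Measurable (X e))
    (hindep : ProbabilityTheory.iIndepFun
      (fun e : {e : G.E // G.red e = true} => X e.1) μ)
    (w₀ : G.E → ℝ) {e : G.E} (he : G.red e = true)
    {φ : ℝ} (hφ : 0 ≤ φ) {f : ℝ → ℝ} (hf_le : ∀ x, f x ≤ φ)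
    (hpdf : ∀ s : Set ℝ, MeasurableSet s → μ (X e ⁻¹' s) = ENNReal.ofReal (∫ x in s, f x))
    {r ε : ℝ} (hε : 0 < ε) :
    μ {ω | (∀ e', G.red e' = true → 0 < X e' ω) ∧
        G.Ppred (fun e' => if G.red e' then X e' ω else w₀ e') u v e r ε} ≤
      ENNReal.ofReal (φ * ε) := by
  classical
  set ι := {i : G.E // G.red i = true} with hι
  set eh : ι := ⟨e, he⟩ with heh
  set Tc : Finset ι := {eh}ᶜ with hTc
  set Y : Ω → (↥Tc → ℝ) := fun ω j => X j.1.1 ω with hY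
  have hYm : Measurable Y := measurable_pi_lambda _ fun j => hX _
  have hpair : Measurable fun ω => (Y ω, X e ω) := hYm.prodMk (hX e)
  have hIndep2 : IndepFun Y (X e) μ := by
    have h := hindep.indepFun_finset Tc {eh} (disjoint_compl_left) (fun i => hX i.1)
    have h2 := h.comp measurable_id
      (measurable_pi_apply (⟨eh, Finset.mem_singleton_self eh⟩ : ({eh} : Finset ι)))
    exact h2
  have hmap : μ.map (fun ω => (Y ω, X e ω)) = (μ.map Y).prod (μ.map (X e)) :=
    (indepFun_iff_map_prod_eq_prod_map_map hYm.aemeasurable (hX e).aemeasurable).1 hIndep2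
  -- reconstruct a full weight function from the product coordinates
  set W : ((↥Tc → ℝ) × ℝ) → G.E → ℝ := fun z e' =>
    if hre : G.red e' = true then
      if h' : e' = e then z.2
      else z.1 ⟨⟨e', hre⟩, Finset.mem_compl.2 (by
        simp only [Finset.mem_singleton]
        exact fun hc => h' (congrArg Subtype.val hc))⟩
    else w₀ e' with hW
  have hWe : ∀ z, W z e = z.2 := fun z => by simp [hW, he]
  have hWw : ∀ ω, (fun e' => if G.red e' then X e' ω else w₀ e') = W (Y ω, X e ω) := by
    intro ω
    funext e'
    by_cases hre : G.red e' = true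
    · by_cases h' : e' = e
      · subst h'; simp [hW, hre]
      · simp only [hW, dif_pos hre, dif_neg h', hre, if_true]; rfl
    · simp [hW, hre]
  have hWagree : ∀ (y : ↥Tc → ℝ) (x1 x2 : ℝ) (e' : G.E), e' ≠ e →
      W (y, x1) e' = W (y, x2) e' := by
    intro y x1 x2 e' hne
    by_cases hre : G.red e' = true
    · simp only [hW, dif_pos hre, dif_neg hne]
    · simp [hW, hre]
  have hWm : ∀ e', Measurable (fun z : (↥Tc → ℝ) × ℝ => W z e') := by
    intro e'
    by_cases hre : G.red e' = true
    · by_cases h' : e' = e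
      · subst h'
        simp only [hW, dif_pos hre, dif_pos rfl]
        exact measurable_snd
      · simp only [hW, dif_pos hre, dif_neg h']
        exact (measurable_pi_apply _).comp measurable_fst
    · simp only [hW, dif_neg hre]
      exact measurable_const
  have hgW : ∀ (z : (↥Tc → ℝ) × ℝ) (l : List G.E), G.greenW (W z) l = G.greenW w₀ l := by
    intro z l
    refine G.greenW_congr_green (fun e' he' => ?_) l
    have hre : ¬G.red e' = true := by simp [he']
    simp [hW, hre]
  have hRm : ∀ q : List G.E, Measurable (fun z : (↥Tc → ℝ) × ℝ => G.redW (W z) q) := by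
    intro q
    induction q with
    | nil => simp only [redW_nil]; exact measurable_const
    | cons a q ih =>
      simp only [redW_cons]
      refine Measurable.add ?_ ih
      by_cases h : G.red a = true
      · simp only [h, if_true]; exact hWm a
      · simp only [h, if_false]; exact measurable_const
  have hmp : ∀ (p : Prop), MeasurableSet {z : (↥Tc → ℝ) × ℝ | p} := fun p => by
    by_cases h : p
    · have : {z : (↥Tc → ℝ) × ℝ | p} = Set.univ := by ext z; simp [h]
      rw [this]; exact MeasurableSet.univ
    · have : {z : (↥Tc → ℝ) × ℝ | p} = ∅ := by ext z; simp [h]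
      rw [this]; exact MeasurableSet.empty
  have hQm : ∀ q : List G.E, MeasurableSet {z : (↥Tc → ℝ) × ℝ | G.Qpred (W z) u v e r q} := by
    intro q
    have hdecomp : {z : (↥Tc → ℝ) × ℝ | G.Qpred (W z) u v e r q} =
        ({z : (↥Tc → ℝ) × ℝ | G.IsPath u v q} ∩ {z | e ∈ q}) ∩
        ⋂ p' : List G.E, (({z : (↥Tc → ℝ) × ℝ | G.IsPath u v p'} ∩ {z | e ∉ p'} ∩
          {z | G.redW (W z) p' ≤ r} ∩
          {z | ¬ G.greenW w₀ q < G.greenW w₀ p'})ᶜ) := by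
      ext z
      simp only [Set.mem_setOf_eq, Set.mem_inter_iff, Set.mem_iInter, Set.mem_compl_iff,
        Qpred, hgW]
      constructor
      · rintro ⟨h1, h2, h3⟩
        exact ⟨⟨h1, h2⟩, fun p' ⟨⟨⟨hp1, hp2⟩, hp3⟩, hp4⟩ => hp4 (h3 p' hp1 hp2 hp3)⟩
      · rintro ⟨⟨h1, h2⟩, h3⟩
        refine ⟨h1, h2, fun p' hp1 hp2 hp3 => ?_⟩
        by_contra hc
        exact h3 p' ⟨⟨⟨hp1, hp2⟩, hp3⟩, hc⟩
    rw [hdecomp]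
    refine (MeasurableSet.inter (MeasurableSet.inter (hmp _) (hmp _)) ?_)
    refine MeasurableSet.iInter (fun p' => MeasurableSet.compl ?_)
    refine MeasurableSet.inter (MeasurableSet.inter (MeasurableSet.inter (hmp _) (hmp _)) ?_) (hmp _)
    exact measurableSet_le (hRm p') measurable_const
  have hPm : MeasurableSet {z : (↥Tc → ℝ) × ℝ | G.Ppred (W z) u v e r ε} := by
    have hdecomp : {z : (↥Tc → ℝ) × ℝ | G.Ppred (W z) u v e r ε} =
        (⋃ q : List G.E, ({z : (↥Tc → ℝ) × ℝ | G.Qpred (W z) u v e r q} ∩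
          {z | G.redW (W z) q ≤ r + ε})) ∩
        (⋂ q : List G.E, ({z : (↥Tc → ℝ) × ℝ | G.Qpred (W z) u v e r q}ᶜ ∪
          {z | r < G.redW (W z) q})) := by
      ext z
      simp only [Set.mem_setOf_eq, Set.mem_inter_iff, Set.mem_iUnion, Set.mem_iInter,
        Set.mem_compl_iff, Set.mem_union, Ppred]
      constructor
      · rintro ⟨⟨q, hq1, hq2⟩, h2⟩
        exact ⟨⟨q, hq1, hq2⟩, fun q' => by
          by_cases hc : G.Qpred (W z) u v e r q'
          · exact Or.inr (h2 q' hc)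
          · exact Or.inl hc⟩
      · rintro ⟨⟨q, hq1, hq2⟩, h2⟩
        refine ⟨⟨q, hq1, hq2⟩, fun q' hq' => ?_⟩
        rcases h2 q' with h | h
        · exact absurd hq' h
        · exact h
    rw [hdecomp]
    refine MeasurableSet.inter ?_ ?_
    · exact MeasurableSet.iUnion (fun q => (hQm q).inter
        (measurableSet_le (hRm q) measurable_const))
    · exact MeasurableSet.iInter (fun q => ((hQm q).compl).union
        (measurableSet_lt measurable_const (hRm q)))
  set C : Set ((↥Tc → ℝ) × ℝ) :=
    {z | (∀ e', G.red e' = true → 0 < W z e') ∧ G.Ppred (W z) u v e r ε} with hC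
  have hposm : MeasurableSet {z : (↥Tc → ℝ) × ℝ | ∀ e', G.red e' = true → 0 < W z e'} := by
    have : {z : (↥Tc → ℝ) × ℝ | ∀ e', G.red e' = true → 0 < W z e'} =
        ⋂ e' : G.E, ({z : (↥Tc → ℝ) × ℝ | G.red e' = true}ᶜ ∪ {z | 0 < W z e'}) := by
      ext z
      simp only [Set.mem_setOf_eq, Set.mem_iInter, Set.mem_union, Set.mem_compl_iff]
      constructor
      · intro h e'
        by_cases hc : G.red e' = true
        · exact Or.inr (h e' hc)
        · exact Or.inl hc
      · intro h e' hre
        rcases h e' with h | h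
        · exact absurd hre h
        · exact h
    rw [this]
    exact MeasurableSet.iInter (fun e' => ((hmp _).compl).union
      (measurableSet_lt measurable_const (hWm e')))
  have hCmeas : MeasurableSet C := by
    rw [hC, Set.setOf_and]
    exact hposm.inter hPm
  have hpre : {ω | (∀ e', G.red e' = true → 0 < X e' ω) ∧
      G.Ppred (fun e' => if G.red e' then X e' ω else w₀ e') u v e r ε} =
      (fun ω => (Y ω, X e ω)) ⁻¹' C := by
    ext ω
    simp only [Set.mem_setOf_eq, Set.mem_preimage, hC, ← hWw ω]
    constructor
    · rintro ⟨h1, h2⟩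
      refine ⟨fun e' hre => ?_, h2⟩
      simp only [hre, if_true]
      exact h1 e' hre
    · rintro ⟨h1, h2⟩
      refine ⟨fun e' hre => ?_, h2⟩
      have := h1 e' hre
      simpa [hre] using this
  have hXi : IsProbabilityMeasure (μ.map (X e)) := Measure.isProbabilityMeasure_map (hX e).aemeasurable
  have hYi : IsProbabilityMeasure (μ.map Y) := Measure.isProbabilityMeasure_map hYm.aemeasurable
  -- the per-section bound
  have hsection : ∀ y : ↥Tc → ℝ, (μ.map (X e)) (Prod.mk y ⁻¹' C) ≤ ENNReal.ofReal (φ * ε) := by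
    intro y
    by_cases hT : (Prod.mk y ⁻¹' C).Nonempty
    swap
    · rw [Set.not_nonempty_iff_eq_empty.1 hT]
      simp
    · have hTpos : ∀ x ∈ Prod.mk y ⁻¹' C, 0 < x := by
        intro x hx
        have := hx.1 e he
        rwa [hWe] at this
      have hdiam : ∀ x1 ∈ Prod.mk y ⁻¹' C, ∀ x2 ∈ Prod.mk y ⁻¹' C, x1 ≤ x2 → x2 - x1 ≤ ε := by
        intro x1 h1 x2 h2 hle'
        have := G.Ppred_diameter he (w1 := W (y, x1)) (w2 := W (y, x2))
          (fun e' hne => hWagree y x1 x2 e' hne)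
          (by rw [hWe, hWe]; exact hle') h1.2 h2.2
        rwa [hWe, hWe] at this
      set a := sInf (Prod.mk y ⁻¹' C) with ha
      have hbdd : BddBelow (Prod.mk y ⁻¹' C) := ⟨0, fun x hx => (hTpos x hx).le⟩
      have hsub : Prod.mk y ⁻¹' C ⊆ Set.Icc a (a + ε) := by
        intro x hx
        refine ⟨csInf_le hbdd hx, ?_⟩
        have hxa : x - ε ≤ a := by
          refine le_csInf hT (fun x' hx' => ?_)
          rcases le_total x' x with h | h
          · linarith [hdiam x' hx' x hx h]
          · linarith
        linarith
      have hint : ∫ x in Set.Icc a (a + ε), f x ≤ φ * ε := by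
        by_cases hInt : IntegrableOn f (Set.Icc a (a + ε)) volume
        · have h1 : ∫ x in Set.Icc a (a + ε), f x ≤ ∫ x in Set.Icc a (a + ε), φ := by
            refine setIntegral_mono_on hInt ?_ measurableSet_Icc (fun x _ => hf_le x)
            refine integrableOn_const ?_
            rw [Real.volume_Icc]
            exact ENNReal.ofReal_ne_top
          have h2 : ∫ _x in Set.Icc a (a + ε), (φ : ℝ) = φ * ε := by
            rw [setIntegral_const, measureReal_def, Real.volume_Icc]
            rw [show a + ε - a = ε by ring, ENNReal.toReal_ofReal hε.le]
            simp [mul_comm]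
          linarith
        · rw [integral_undef hInt]
          positivity
      calc (μ.map (X e)) (Prod.mk y ⁻¹' C) ≤ (μ.map (X e)) (Set.Icc a (a + ε)) :=
            measure_mono hsub
        _ = μ (X e ⁻¹' Set.Icc a (a + ε)) := Measure.map_apply (hX e) measurableSet_Icc
        _ = ENNReal.ofReal (∫ x in Set.Icc a (a + ε), f x) := hpdf _ measurableSet_Icc
        _ ≤ ENNReal.ofReal (φ * ε) := ENNReal.ofReal_le_ofReal hint
  calc μ {ω | (∀ e', G.red e' = true → 0 < X e' ω) ∧
        G.Ppred (fun e' => if G.red e' then X e' ω else w₀ e') u v e r ε}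
      = μ ((fun ω => (Y ω, X e ω)) ⁻¹' C) := by rw [hpre]
    _ = (μ.map (fun ω => (Y ω, X e ω))) C := (Measure.map_apply hpair hCmeas).symm
    _ = ((μ.map Y).prod (μ.map (X e))) C := by rw [hmap]
    _ = ∫⁻ y, (μ.map (X e)) (Prod.mk y ⁻¹' C) ∂(μ.map Y) := Measure.prod_apply hCmeas
    _ ≤ ∫⁻ _y, ENNReal.ofReal (φ * ε) ∂(μ.map Y) := lintegral_mono hsection
    _ = ENNReal.ofReal (φ * ε) := by simp

end BiGraph

/-- **Corollary 5.** Let `G` be a finite weighted bicoloured-edge graph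
with `u`, `v` joined both by a pure green path and by a pure red path, where the green
edge weights are fixed (given by `w₀`) and the weights `X e` of the red edges `e` are
independent random variables with probability densities `f e` supported on `(0,∞)` and
bounded by `φ e`.  Then for every `r` with `0 ≤ r < r_tot` and every `ε > 0`,
`ℙ(Δ(r) ≤ r + ε) ≤ (Σ_{red e} φ e) · ε`. -/
theorem prob_Delta_le_le {V : Type} [Fintype V] (G : BiGraph V) [Fintype G.E]
    (u v : V)
    (hgreen : ∃ p : List G.E, G.IsPath u v p ∧ ∀ e ∈ p, G.red e = false)
    (hred : ∃ p : List G.E, G.IsPath u v p ∧ ∀ e ∈ p, G.red e = true)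
    (w₀ : G.E → ℝ) (hw₀ : ∀ e : G.E, G.red e = false → 0 < w₀ e)
    {Ω : Type} [MeasurableSpace Ω] (μ : MeasureTheory.Measure Ω) [IsProbabilityMeasure μ]
    (X : G.E → Ω → ℝ) (hX : ∀ e, Measurable (X e))
    (hindep : ProbabilityTheory.iIndepFun
      (fun e : {e : G.E // G.red e = true} => X e.1) μ)
    (φ : G.E → ℝ) (f : G.E → ℝ → ℝ)
    (hφ : ∀ e : G.E, G.red e = true → 0 < φ e)
    (hf_nonneg : ∀ e : G.E, G.red e = true → ∀ x, 0 ≤ f e x)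
    (hf_le : ∀ e : G.E, G.red e = true → ∀ x, f e x ≤ φ e)
    (hf_supp : ∀ e : G.E, G.red e = true → ∀ x ≤ 0, f e x = 0)
    (hf_pdf : ∀ e : G.E, G.red e = true → ∀ s : Set ℝ, MeasurableSet s →
      μ (X e ⁻¹' s) = ENNReal.ofReal (∫ x in s, f e x))
    (r ε : ℝ) (hr : 0 ≤ r) (hε : 0 < ε) :
    μ {ω : Ω | r < G.rtot (fun e => if G.red e then X e ω else w₀ e) u v ∧
        G.Delta (fun e => if G.red e then X e ω else w₀ e) u v r ≤ r + ε} ≤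
      ENNReal.ofReal ((∑ e ∈ Finset.univ.filter (fun e : G.E => G.red e = true), φ e) * ε) := by
  classical
  set Ev := {ω : Ω | r < G.rtot (fun e => if G.red e then X e ω else w₀ e) u v ∧
      G.Delta (fun e => if G.red e then X e ω else w₀ e) u v r ≤ r + ε} with hEv
  set B : {i : G.E // G.red i = true} → Set Ω := fun i =>
    {ω | (∀ e', G.red e' = true → 0 < X e' ω) ∧
      G.Ppred (fun e' => if G.red e' then X e' ω else w₀ e') u v i.1 r ε} with hB
  have hBbound : ∀ i : {i : G.E // G.red i = true}, μ (B i) ≤ ENNReal.ofReal (φ i.1 * ε) :=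
    fun i => G.per_edge_bound u v μ X hX hindep w₀ i.2 (hφ i.1 i.2).le (hf_le i.1 i.2)
      (hf_pdf i.1 i.2) hε
  set Pos := {ω : Ω | ∀ e', G.red e' = true → 0 < X e' ω} with hPos
  have hPosc : μ Posᶜ = 0 := by
    have hsub : Posᶜ ⊆ ⋃ i : {i : G.E // G.red i = true}, X i.1 ⁻¹' Set.Iic 0 := by
      intro ω hω
      simp only [hPos, Set.mem_compl_iff, Set.mem_setOf_eq] at hω
      push_neg at hω
      obtain ⟨e', hre, hle⟩ := hω
      exact Set.mem_iUnion.2 ⟨⟨e', hre⟩, by simpa using hle⟩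
    refine measure_mono_null hsub (measure_iUnion_null fun i => ?_)
    rw [hf_pdf i.1 i.2 _ measurableSet_Iic]
    have hzero : ∫ x in Set.Iic (0:ℝ), f i.1 x = 0 := by
      rw [setIntegral_congr_fun measurableSet_Iic (fun x hx => hf_supp i.1 i.2 x hx)]
      simp
    rw [hzero]
    simp
  have hsubmain : Ev ∩ Pos ⊆ ⋃ i : {i : G.E // G.red i = true}, B i := by
    rintro ω ⟨⟨h1, h2⟩, hpos⟩
    have hwpos : ∀ e', 0 < (fun e' => if G.red e' then X e' ω else w₀ e') e' := by
      intro e'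
      by_cases hre : G.red e' = true
      · simpa [hre] using hpos e' hre
      · have : G.red e' = false := by simpa using hre
        simpa [this] using hw₀ e' this
    obtain ⟨e, hecol, hP⟩ := G.key_combinatorial hgreen hred hwpos hr h1 h2
    exact Set.mem_iUnion.2 ⟨⟨e, hecol⟩, hpos, hP⟩
  have hdiffnull : μ (Ev \ Pos) = 0 :=
    measure_mono_null (fun ω hω => hω.2) hPosc
  calc μ Ev ≤ μ (Ev ∩ Pos) + μ (Ev \ Pos) := measure_le_inter_add_diff μ Ev Pos
    _ = μ (Ev ∩ Pos) := by rw [hdiffnull, add_zero]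
    _ ≤ μ (⋃ i : {i : G.E // G.red i = true}, B i) := measure_mono hsubmain
    _ ≤ ∑' i : {i : G.E // G.red i = true}, μ (B i) := measure_iUnion_le _
    _ ≤ ∑' i : {i : G.E // G.red i = true}, ENNReal.ofReal (φ i.1 * ε) :=
        ENNReal.tsum_le_tsum hBbound
    _ = ∑ i : {i : G.E // G.red i = true}, ENNReal.ofReal (φ i.1 * ε) := tsum_fintype _
    _ = ∑ e ∈ Finset.univ.filter (fun e : G.E => G.red e = true), ENNReal.ofReal (φ e * ε) := by
        exact (Finset.sum_subtype (Finset.univ.filter (fun e : G.E => G.red e = true))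
          (fun x => by simp) (fun e => ENNReal.ofReal (φ e * ε))).symm
    _ = ENNReal.ofReal (∑ e ∈ Finset.univ.filter (fun e : G.E => G.red e = true), φ e * ε) :=
        (ENNReal.ofReal_sum_of_nonneg (fun e he => by
          have := hφ e (by simpa using (Finset.mem_filter.1 he).2)
          positivity)).symm
    _ = ENNReal.ofReal ((∑ e ∈ Finset.univ.filter (fun e : G.E => G.red e = true), φ e) * ε) := by
        rw [Finset.sum_mul]
end
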